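/- For symmetric kernels f ∈ L²(Tⁿ) and g ∈ L²(Tᵐ) with Hilbert basis coefficient derivatives s_{i,f}, s_{l,g}, one has ∑_{i,l≥1} ‖s_{i,f} ⊗_r s_{l,g}‖² = n² m² ‖f ⊗_r g‖² for every r = 0,…,(n−1)∧(m−1). -/
import Mathlib


/-- The inner product of two (coefficient) kernels: `⟨F,G⟩ = ∑' x, F x * G x`. -/
noncomputable def ip {α : Type*} (F G : α → ℝ) : ℝ := ∑' x, F x * G x

/-- The squared norm `‖F‖² = ⟨F,F⟩` of a kernel. -/
noncomputable def nsq {α : Type*} (F : α → ℝ) : ℝ := ip F F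

/-- A kernel of order `n` (an element of `H^{⊗n}` written in coordinates with respect to a
Hilbert basis of `H`) is symmetric if its coefficients are invariant under permutations. -/
def IsSym {n : ℕ} (f : (Fin n → ℕ) → ℝ) : Prop :=
  ∀ σ : Equiv.Perm (Fin n), ∀ j : Fin n → ℕ, f (j ∘ σ) = f j

/-- The contraction of order `r` of a kernel `f` of order `n` with a kernel `g` of order `m`;
the result is a kernel of order `c = n + m - 2r`: `r` indices of `f` and `g` are paired and
summed out, the remaining `n - r` indices of `f` and `m - r` indices of `g` stay free. -/
noncomputable def contr {n m r c : ℕ} (hrn : r ≤ n) (hrm : r ≤ m) (hc : n + m = 2 * r + c)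
    (f : (Fin n → ℕ) → ℝ) (g : (Fin m → ℕ) → ℝ) : (Fin c → ℕ) → ℝ :=
  fun t => ∑' u : Fin r → ℕ,
    (f fun i => if hi : (i : ℕ) < r then u ⟨i, hi⟩
        else t ⟨(i : ℕ) - r, by have := i.isLt; omega⟩) *
    (g fun i => if hi : (i : ℕ) < r then u ⟨i, hi⟩
        else t ⟨n - r + ((i : ℕ) - r), by have := i.isLt; omega⟩)

/-- Symmetrization of a kernel of order `c`. -/
noncomputable def symmize {c : ℕ} (F : (Fin c → ℕ) → ℝ) : (Fin c → ℕ) → ℝ :=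
  fun t => (1 / (Nat.factorial c : ℝ)) * ∑ σ : Equiv.Perm (Fin c), F (t ∘ σ)

/-- `sder f i` is the kernel `s_{i,f} = n ∑_{j₂,…,jₙ} λ_{i,j₂,…,jₙ} e_{j₂}⊗…⊗e_{jₙ}`,
the coefficient kernel of `⟨D Iₙ(f), e_i⟩`. -/
noncomputable def sder {n : ℕ} (f : (Fin n → ℕ) → ℝ) (i : ℕ) : (Fin (n - 1) → ℕ) → ℝ :=
  fun j => (n : ℝ) * f fun k => if hk : (k : ℕ) = 0 then i
    else j ⟨(k : ℕ) - 1, by have := k.isLt; omega⟩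

/-- Splitting/gluing equivalence for index tuples. -/
def splitE (p q c : ℕ) (h : p + q = c) : ((Fin p → ℕ) × (Fin q → ℕ)) ≃ (Fin c → ℕ) where
  toFun x k := if hk : (k : ℕ) < p then x.1 ⟨k, hk⟩ else x.2 ⟨(k : ℕ) - p, by have := k.isLt; omega⟩
  invFun t := (fun j => t ⟨j, by omega⟩, fun j => t ⟨p + j, by omega⟩)
  left_inv := by
    rintro ⟨b, c⟩
    refine Prod.ext (funext fun j => ?_) (funext fun j => ?_) <;> dsimp only
    · rw [dif_pos j.isLt]
    · rw [dif_neg (by omega)]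
      congr 1; exact Fin.ext (by simp)
  right_inv := by
    intro t; funext k; dsimp only
    by_cases hk : (k : ℕ) < p
    · rw [dif_pos hk]
    · rw [dif_neg hk]; congr 1; exact Fin.ext (by simp; omega)

/-- Prepending an index. -/
def consE (p q : ℕ) (h : p + 1 = q) : (ℕ × (Fin p → ℕ)) ≃ (Fin q → ℕ) where
  toFun x k := if hk : (k : ℕ) = 0 then x.1 else x.2 ⟨(k : ℕ) - 1, by have := k.isLt; omega⟩
  invFun t := (t ⟨0, by omega⟩, fun j => t ⟨(j : ℕ) + 1, by omega⟩)
  left_inv := by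
    rintro ⟨i, w⟩
    refine Prod.ext ?_ (funext fun j => ?_) <;> dsimp only
    · rw [dif_pos rfl]
    · rw [dif_neg (by omega)]
      simp
  right_inv := by
    intro t; funext k; dsimp only
    by_cases hk : (k : ℕ) = 0
    · rw [dif_pos hk]; congr 1; exact Fin.ext (by simp [hk])
    · rw [dif_neg hk]; congr 1; exact Fin.ext (by simp; omega)

/-- The cycle sending `0 ↦ r`, `k ↦ k-1` for `1 ≤ k ≤ r`, identity above `r`. -/
def cyc (n r : ℕ) (h : r < n) : Equiv.Perm (Fin n) where
  toFun k := if (k : ℕ) = 0 then ⟨r, h⟩ else if (k : ℕ) ≤ r then ⟨(k : ℕ) - 1, by have := k.isLt; omega⟩ else k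
  invFun k := if (k : ℕ) = r then ⟨0, by omega⟩ else if hk : (k : ℕ) < r then ⟨(k : ℕ) + 1, by omega⟩ else k
  left_inv := by
    intro k; apply Fin.ext; dsimp only
    split_ifs <;> simp_all <;> omega
  right_inv := by
    intro k; apply Fin.ext; dsimp only
    split_ifs <;> simp_all <;> omega

private lemma abs_mul_le_half (x y : ℝ) : |x * y| ≤ (x * x + y * y) / 2 := by
  rcases abs_cases (x * y) with ⟨h, _⟩ | ⟨h, _⟩ <;> nlinarith [sq_nonneg (x - y), sq_nonneg (x + y)]

lemma summable_abs_mul {ι : Type*} {u v : ι → ℝ}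
    (hu : Summable fun a => u a * u a) (hv : Summable fun a => v a * v a) :
    Summable fun a => |u a * v a| :=
  Summable.of_nonneg_of_le (fun a => abs_nonneg _) (fun a => abs_mul_le_half _ _)
    ((hu.add hv).div_const 2)

/-- Cauchy–Schwarz for tsums. -/
lemma tsum_abs_mul_sq_le {ι : Type*} (u v : ι → ℝ)
    (hu : Summable fun a => u a * u a) (hv : Summable fun a => v a * v a) :
    (∑' a, |u a * v a|) * (∑' a, |u a * v a|) ≤ (∑' a, u a * u a) * (∑' a, v a * v a) := by
  have habs : Summable fun a => |u a * v a| := summable_abs_mul hu hv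
  have hA : (0:ℝ) ≤ ∑' a, |u a * v a| := tsum_nonneg fun a => abs_nonneg _
  have hU : (0:ℝ) ≤ ∑' a, u a * u a := tsum_nonneg fun a => mul_self_nonneg _
  have hV : (0:ℝ) ≤ ∑' a, v a * v a := tsum_nonneg fun a => mul_self_nonneg _
  have key : (∑' a, |u a * v a|) ≤ Real.sqrt ((∑' a, u a * u a) * (∑' a, v a * v a)) := by
    refine Summable.tsum_le_of_sum_le habs fun s => ?_
    have cs := Finset.sum_mul_sq_le_sq_mul_sq s (fun a => |u a|) (fun a => |v a|)
    have h2 : (∑ a ∈ s, |u a| ^ 2) * (∑ a ∈ s, |v a| ^ 2) ≤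
        (∑' a, u a * u a) * (∑' a, v a * v a) := by
      have h3 : ∑ a ∈ s, |u a| ^ 2 ≤ ∑' a, u a * u a := by
        refine (le_of_eq ?_).trans (Summable.sum_le_tsum s (fun a _ => mul_self_nonneg _) hu)
        exact Finset.sum_congr rfl fun a _ => by rw [sq_abs, sq]
      have h4 : ∑ a ∈ s, |v a| ^ 2 ≤ ∑' a, v a * v a := by
        refine (le_of_eq ?_).trans (Summable.sum_le_tsum s (fun a _ => mul_self_nonneg _) hv)
        exact Finset.sum_congr rfl fun a _ => by rw [sq_abs, sq]
      exact mul_le_mul h3 h4 (Finset.sum_nonneg fun a _ => sq_nonneg _)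
        (tsum_nonneg fun a => mul_self_nonneg _)
    have : ∑ a ∈ s, |u a * v a| = ∑ a ∈ s, |u a| * |v a| :=
      Finset.sum_congr rfl fun a _ => abs_mul _ _
    rw [this]
    exact Real.le_sqrt_of_sq_le (cs.trans h2)
  calc (∑' a, |u a * v a|) * (∑' a, |u a * v a|)
      ≤ Real.sqrt ((∑' a, u a * u a) * (∑' a, v a * v a)) *
        Real.sqrt ((∑' a, u a * u a) * (∑' a, v a * v a)) :=
        mul_le_mul key key hA (Real.sqrt_nonneg _)
    _ = (∑' a, u a * u a) * (∑' a, v a * v a) := Real.mul_self_sqrt (mul_nonneg hU hV)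

section Quad

variable {α β γ : Type*} (F : α × β → ℝ) (G : α × γ → ℝ)

/-- The quadruple-product kernel arising from expanding `‖F ⊗ G‖²`. -/
def quadK : ((β × γ) × (α × α)) → ℝ := fun q =>
  F (q.2.1, q.1.1) * G (q.2.1, q.1.2) * (F (q.2.2, q.1.1) * G (q.2.2, q.1.2))

variable {F G}

lemma sliceF (hF : Summable fun p => F p * F p) (b : β) :
    Summable fun a => F (a, b) * F (a, b) := by
  have h : Summable ((fun p => F p * F p) ∘ (fun a => (a, b))) :=
    hF.comp_injective fun a a' h => congrArg Prod.fst h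
  exact h

lemma sliceSumF (hF : Summable fun p => F p * F p) :
    Summable fun b => ∑' a, F (a, b) * F (a, b) := by
  have h : Summable fun p : β × α => F (p.2, p.1) * F (p.2, p.1) := by
    have h2 : Summable ((fun p => F p * F p) ∘ (Equiv.prodComm β α)) :=
      (Equiv.summable_iff _).mpr hF
    exact h2
  exact ((summable_prod_of_nonneg fun p => mul_self_nonneg _).mp h).2

lemma summable_FG (hF : Summable fun p => F p * F p) (hG : Summable fun p => G p * G p)
    (b : β) (c : γ) : Summable fun a => F (a, b) * G (a, c) :=
  (summable_abs_mul (sliceF hF b) (sliceF hG c)).of_abs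

lemma quadK_abs_summable (hF : Summable fun p => F p * F p)
    (hG : Summable fun p => G p * G p) :
    Summable fun q => |quadK F G q| := by
  have hfib : ∀ bc : β × γ, Summable fun aa : α × α =>
      |F (aa.1, bc.1) * G (aa.1, bc.2)| * |F (aa.2, bc.1) * G (aa.2, bc.2)| := fun bc =>
    Summable.mul_of_nonneg (f := fun a => |F (a, bc.1) * G (a, bc.2)|)
      (g := fun a => |F (a, bc.1) * G (a, bc.2)|)
      (summable_abs_mul (sliceF hF bc.1) (sliceF hG bc.2))
      (summable_abs_mul (sliceF hF bc.1) (sliceF hG bc.2))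
      (fun a => abs_nonneg _) (fun a => abs_nonneg _)
  have habs : ∀ q : (β × γ) × (α × α), |quadK F G q| =
      |F (q.2.1, q.1.1) * G (q.2.1, q.1.2)| * |F (q.2.2, q.1.1) * G (q.2.2, q.1.2)| := by
    intro q; rw [quadK, abs_mul]
  refine (summable_prod_of_nonneg fun q => abs_nonneg _).mpr ⟨fun bc => ?_, ?_⟩
  · exact (hfib bc).congr fun aa => (habs (bc, aa)).symm
  · refine Summable.of_nonneg_of_le (fun bc => tsum_nonneg fun aa => abs_nonneg _)
      (fun bc => ?_)
      ((sliceSumF hF).mul_of_nonneg (sliceSumF hG)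
        (fun b => tsum_nonneg fun a => mul_self_nonneg _)
        (fun c => tsum_nonneg fun a => mul_self_nonneg _))
    have h1 : ∑' aa : α × α, |quadK F G (bc, aa)| =
        (∑' a, |F (a, bc.1) * G (a, bc.2)|) * (∑' a, |F (a, bc.1) * G (a, bc.2)|) := by
      rw [tsum_congr fun aa => habs (bc, aa)]
      exact (Summable.tsum_mul_tsum (summable_abs_mul (sliceF hF bc.1) (sliceF hG bc.2))
        (summable_abs_mul (sliceF hF bc.1) (sliceF hG bc.2)) (hfib bc)).symm
    rw [h1]
    exact tsum_abs_mul_sq_le (fun a => F (a, bc.1)) (fun a => G (a, bc.2))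
      (sliceF hF bc.1) (sliceF hG bc.2)
end Quad

section Quad2
variable {α β γ : Type*} {F : α × β → ℝ} {G : α × γ → ℝ}

lemma quadK_fib_summable (hF : Summable fun p => F p * F p)
    (hG : Summable fun p => G p * G p) (b : β) (c : γ) :
    Summable fun aa : α × α =>
      F (aa.1, b) * G (aa.1, c) * (F (aa.2, b) * G (aa.2, c)) := by
  have h : Summable fun aa : α × α =>
      |F (aa.1, b) * G (aa.1, c)| * |F (aa.2, b) * G (aa.2, c)| :=
    Summable.mul_of_nonneg (f := fun a => |F (a, b) * G (a, c)|)
      (g := fun a => |F (a, b) * G (a, c)|)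
      (summable_abs_mul (sliceF hF b) (sliceF hG c))
      (summable_abs_mul (sliceF hF b) (sliceF hG c))
      (fun a => abs_nonneg _) (fun a => abs_nonneg _)
  exact (h.congr fun aa => (abs_mul _ _).symm).of_abs

lemma quadK_tsum_eq (hF : Summable fun p => F p * F p)
    (hG : Summable fun p => G p * G p) :
    ∑' q, quadK F G q
      = ∑' bc : β × γ,
          (∑' a, F (a, bc.1) * G (a, bc.2)) * (∑' a, F (a, bc.1) * G (a, bc.2)) := by
  have hK : Summable (quadK F G) := (quadK_abs_summable hF hG).of_abs
  rw [Summable.tsum_prod' hK fun bc => (quadK_fib_summable hF hG bc.1 bc.2).congr fun aa => rfl]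
  refine tsum_congr fun bc => ?_
  exact (Summable.tsum_mul_tsum (summable_FG hF hG bc.1 bc.2) (summable_FG hF hG bc.1 bc.2)
    (quadK_fib_summable hF hG bc.1 bc.2)).symm
end Quad2

lemma contr_apply {n m r c : ℕ} (hrn : r ≤ n) (hrm : r ≤ m) (hc : n + m = 2 * r + c)
    (f : (Fin n → ℕ) → ℝ) (g : (Fin m → ℕ) → ℝ) (b : Fin (n - r) → ℕ) (d : Fin (m - r) → ℕ) :
    contr hrn hrm hc f g (splitE (n - r) (m - r) c (by omega) (b, d))
      = ∑' u : Fin r → ℕ,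
          f (splitE r (n - r) n (by omega) (u, b)) * g (splitE r (m - r) m (by omega) (u, d)) := by
  unfold contr
  refine tsum_congr fun u => ?_
  congr 1
  · congr 1; funext i
    simp only [splitE, Equiv.coe_fn_mk]
    by_cases hi : (i : ℕ) < r
    · rw [dif_pos hi, dif_pos hi]
    · rw [dif_neg hi, dif_neg hi, dif_pos (show ((i : ℕ) - r) < n - r by have := i.isLt; omega)]
  · congr 1; funext i
    simp only [splitE, Equiv.coe_fn_mk]
    by_cases hi : (i : ℕ) < r
    · rw [dif_pos hi, dif_pos hi]
    · rw [dif_neg hi, dif_neg hi, dif_neg (show ¬ (n - r + ((i : ℕ) - r) < n - r) by omega)]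
      congr 1; exact Fin.ext (by simp only [Fin.val_mk]; omega)

lemma sder_apply {n : ℕ} (hn : 1 ≤ n) (f : (Fin n → ℕ) → ℝ) (i : ℕ) (j : Fin (n - 1) → ℕ) :
    sder f i j = (n : ℝ) * f (consE (n - 1) n (by omega) (i, j)) := rfl

lemma cyc_glue (n r : ℕ) (hn : 1 ≤ n) (hr : r ≤ n - 1) (i : ℕ) (u : Fin r → ℕ)
    (t : Fin (n - 1 - r) → ℕ) :
    consE (n - 1) n (by omega) (i, splitE r (n - 1 - r) (n - 1) (by omega) (u, t))
      = (splitE r (n - r) n (by omega) (u, consE (n - 1 - r) (n - r) (by omega) (i, t)))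
          ∘ (cyc n r (by omega)) := by
  funext k
  simp only [consE, splitE, cyc, Equiv.coe_fn_mk, Function.comp_apply]
  split_ifs <;>
    first
      | rfl
      | omega
      | (exact absurd (show r < r from by assumption) (lt_irrefl r))
      | (exfalso; exact (by assumption : ¬(r - r = 0)) (by omega))
      | (congr 1; exact Fin.ext (by simp only [Fin.val_mk]; omega))

lemma nsq_contr {n m r c : ℕ} (hrn : r ≤ n) (hrm : r ≤ m) (hc : n + m = 2 * r + c)
    (f : (Fin n → ℕ) → ℝ) (g : (Fin m → ℕ) → ℝ)
    (hfs : Summable fun j => f j * f j) (hgs : Summable fun j => g j * g j) :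
    nsq (contr hrn hrm hc f g)
      = ∑' q : ((Fin (n - r) → ℕ) × (Fin (m - r) → ℕ)) × ((Fin r → ℕ) × (Fin r → ℕ)),
          quadK (fun p => f (splitE r (n - r) n (by omega) p))
            (fun p => g (splitE r (m - r) m (by omega) p)) q := by
  have hF : Summable fun p : (Fin r → ℕ) × (Fin (n - r) → ℕ) =>
      f (splitE r (n - r) n (by omega) p) * f (splitE r (n - r) n (by omega) p) := by
    have h : Summable ((fun j => f j * f j) ∘ (splitE r (n - r) n (by omega))) :=
      (Equiv.summable_iff _).mpr hfs
    exact h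
  have hG : Summable fun p : (Fin r → ℕ) × (Fin (m - r) → ℕ) =>
      g (splitE r (m - r) m (by omega) p) * g (splitE r (m - r) m (by omega) p) := by
    have h : Summable ((fun j => g j * g j) ∘ (splitE r (m - r) m (by omega))) :=
      (Equiv.summable_iff _).mpr hgs
    exact h
  rw [quadK_tsum_eq hF hG]
  calc nsq (contr hrn hrm hc f g)
      = ∑' p : (Fin (n - r) → ℕ) × (Fin (m - r) → ℕ),
          contr hrn hrm hc f g (splitE (n - r) (m - r) c (by omega) p) *
          contr hrn hrm hc f g (splitE (n - r) (m - r) c (by omega) p) :=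
        (Equiv.tsum_eq (splitE (n - r) (m - r) c (by omega))
          (fun t => contr hrn hrm hc f g t * contr hrn hrm hc f g t)).symm
    _ = ∑' bd : (Fin (n - r) → ℕ) × (Fin (m - r) → ℕ),
          (∑' a : Fin r → ℕ,
            f (splitE r (n - r) n (by omega) (a, bd.1)) * g (splitE r (m - r) m (by omega) (a, bd.2))) *
          (∑' a : Fin r → ℕ,
            f (splitE r (n - r) n (by omega) (a, bd.1)) * g (splitE r (m - r) m (by omega) (a, bd.2))) := by
        refine tsum_congr fun bd => ?_
        rcases bd with ⟨b, d⟩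
        rw [contr_apply hrn hrm hc f g b d]

/-- For symmetric `f ∈ H^{⊗n}`, `g ∈ H^{⊗m}` and `r = 0,…,(n−1)∧(m−1)`,
`∑_{i,l} ‖s_{i,f} ⊗_r s_{l,g}‖² = n² m² ‖f ⊗_r g‖²`. -/
theorem sum_sder_contraction_norms (n m r : ℕ) (hn : 1 ≤ n) (hm : 1 ≤ m)
    (hr : r ≤ min (n - 1) (m - 1))
    (f : (Fin n → ℕ) → ℝ) (g : (Fin m → ℕ) → ℝ) (hf : IsSym f) (hg : IsSym g)
    (hf2 : Summable fun j => f j * f j) (hg2 : Summable fun j => g j * g j) :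
    (∑' il : ℕ × ℕ,
        nsq (contr (r := r) (c := n + m - 2 - 2 * r) (by omega) (by omega) (by omega)
          (sder f il.1) (sder g il.2)))
      = (n : ℝ) ^ 2 * (m : ℝ) ^ 2 *
          nsq (contr (r := r) (c := n + m - 2 * r) (by omega) (by omega) (by omega) f g) := by
  have hrn1 : r ≤ n - 1 := le_trans hr (min_le_left _ _)
  have hrm1 : r ≤ m - 1 := le_trans hr (min_le_right _ _)
  -- summability of the squared derived kernels
  have hsf : ∀ i, Summable fun j => sder f i j * sder f i j := by
    intro i
    have hinj : Function.Injective (fun w : Fin (n - 1) → ℕ => consE (n - 1) n (by omega) (i, w)) :=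
      fun w w' h => congrArg Prod.snd ((consE (n - 1) n (by omega)).injective h)
    have h1 : Summable ((fun j => f j * f j) ∘ (fun w => consE (n - 1) n (by omega) (i, w))) :=
      hf2.comp_injective hinj
    have h2 : Summable fun w : Fin (n - 1) → ℕ =>
        f (consE (n - 1) n (by omega) (i, w)) * f (consE (n - 1) n (by omega) (i, w)) := h1
    refine (h2.mul_left ((n : ℝ) * (n : ℝ))).congr fun w => ?_
    rw [sder_apply hn]; ring
  have hsg : ∀ l, Summable fun j => sder g l j * sder g l j := by
    intro l
    have hinj : Function.Injective (fun w : Fin (m - 1) → ℕ => consE (m - 1) m (by omega) (l, w)) :=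
      fun w w' h => congrArg Prod.snd ((consE (m - 1) m (by omega)).injective h)
    have h1 : Summable ((fun j => g j * g j) ∘ (fun w => consE (m - 1) m (by omega) (l, w))) :=
      hg2.comp_injective hinj
    have h2 : Summable fun w : Fin (m - 1) → ℕ =>
        g (consE (m - 1) m (by omega) (l, w)) * g (consE (m - 1) m (by omega) (l, w)) := h1
    refine (h2.mul_left ((m : ℝ) * (m : ℝ))).congr fun w => ?_
    rw [sder_apply hm]; ring
  -- the base kernels as functions on split indices
  have hF0 : Summable fun p : (Fin r → ℕ) × (Fin (n - r) → ℕ) =>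
      f (splitE r (n - r) n (by omega) p) * f (splitE r (n - r) n (by omega) p) := by
    have h : Summable ((fun j => f j * f j) ∘ (splitE r (n - r) n (by omega))) :=
      (Equiv.summable_iff _).mpr hf2
    exact h
  have hG0 : Summable fun p : (Fin r → ℕ) × (Fin (m - r) → ℕ) =>
      g (splitE r (m - r) m (by omega) p) * g (splitE r (m - r) m (by omega) p) := by
    have h : Summable ((fun j => g j * g j) ∘ (splitE r (m - r) m (by omega))) :=
      (Equiv.summable_iff _).mpr hg2
    exact h
  have hQF : ∀ i, Summable fun p : (Fin r → ℕ) × (Fin (n - 1 - r) → ℕ) =>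
      sder f i (splitE r (n - 1 - r) (n - 1) (by omega) p) *
      sder f i (splitE r (n - 1 - r) (n - 1) (by omega) p) := by
    intro i
    have h : Summable ((fun j => sder f i j * sder f i j) ∘ (splitE r (n - 1 - r) (n - 1) (by omega))) :=
      (Equiv.summable_iff _).mpr (hsf i)
    exact h
  have hQG : ∀ l, Summable fun p : (Fin r → ℕ) × (Fin (m - 1 - r) → ℕ) =>
      sder g l (splitE r (m - 1 - r) (m - 1) (by omega) p) *
      sder g l (splitE r (m - 1 - r) (m - 1) (by omega) p) := by
    intro l
    have h : Summable ((fun j => sder g l j * sder g l j) ∘ (splitE r (m - 1 - r) (m - 1) (by omega))) :=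
      (Equiv.summable_iff _).mpr (hsg l)
    exact h
  -- the symmetry step
  have hfc : ∀ (i : ℕ) (u : Fin r → ℕ) (t1 : Fin (n - 1 - r) → ℕ),
      sder f i (splitE r (n - 1 - r) (n - 1) (by omega) (u, t1))
        = (n : ℝ) * f (splitE r (n - r) n (by omega)
            (u, consE (n - 1 - r) (n - r) (by omega) (i, t1))) := by
    intro i u t1
    rw [sder_apply hn, cyc_glue n r hn hrn1, hf]
  have hgc : ∀ (l : ℕ) (u : Fin r → ℕ) (t2 : Fin (m - 1 - r) → ℕ),
      sder g l (splitE r (m - 1 - r) (m - 1) (by omega) (u, t2))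
        = (m : ℝ) * g (splitE r (m - r) m (by omega)
            (u, consE (m - 1 - r) (m - r) (by omega) (l, t2))) := by
    intro l u t2
    rw [sder_apply hm, cyc_glue m r hm hrm1, hg]
  -- the master equivalence
  let eM : ((ℕ × ℕ) × (((Fin (n - 1 - r) → ℕ) × (Fin (m - 1 - r) → ℕ)) ×
        ((Fin r → ℕ) × (Fin r → ℕ)))) ≃
      (((Fin (n - r) → ℕ) × (Fin (m - r) → ℕ)) × ((Fin r → ℕ) × (Fin r → ℕ))) :=
    (Equiv.prodAssoc (ℕ × ℕ) ((Fin (n - 1 - r) → ℕ) × (Fin (m - 1 - r) → ℕ))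
        ((Fin r → ℕ) × (Fin r → ℕ))).symm.trans
      (Equiv.prodCongr
        ((Equiv.prodProdProdComm ℕ ℕ (Fin (n - 1 - r) → ℕ) (Fin (m - 1 - r) → ℕ)).trans
          (Equiv.prodCongr (consE (n - 1 - r) (n - r) (by omega))
            (consE (m - 1 - r) (m - r) (by omega))))
        (Equiv.refl _))
  have happ : ∀ (i l : ℕ) t1 t2 u v, eM ((i, l), ((t1, t2), (u, v)))
      = ((consE (n - 1 - r) (n - r) (by omega) (i, t1),
          consE (m - 1 - r) (m - r) (by omega) (l, t2)), (u, v)) := fun _ _ _ _ _ _ => rfl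
  -- pointwise identity
  have hpt : ∀ (p : (ℕ × ℕ) × (((Fin (n - 1 - r) → ℕ) × (Fin (m - 1 - r) → ℕ)) ×
        ((Fin r → ℕ) × (Fin r → ℕ)))),
      quadK (fun q => sder f p.1.1 (splitE r (n - 1 - r) (n - 1) (by omega) q))
          (fun q => sder g p.1.2 (splitE r (m - 1 - r) (m - 1) (by omega) q)) p.2
        = ((n : ℝ) * n * ((m : ℝ) * m)) *
            quadK (fun q => f (splitE r (n - r) n (by omega) q))
              (fun q => g (splitE r (m - r) m (by omega) q)) (eM p) := by
    rintro ⟨⟨i, l⟩, ⟨⟨t1, t2⟩, ⟨u, v⟩⟩⟩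
    rw [happ]
    simp only [quadK]
    rw [hfc i u t1, hfc i v t1, hgc l u t2, hgc l v t2]
    ring
  -- global summability
  have hK : Summable (quadK (fun q => f (splitE r (n - r) n (by omega) q))
      (fun q => g (splitE r (m - r) m (by omega) q))) :=
    (quadK_abs_summable hF0 hG0).of_abs
  have hbig : Summable (fun p : (ℕ × ℕ) × (((Fin (n - 1 - r) → ℕ) × (Fin (m - 1 - r) → ℕ)) ×
        ((Fin r → ℕ) × (Fin r → ℕ))) =>
      quadK (fun q => sder f p.1.1 (splitE r (n - 1 - r) (n - 1) (by omega) q))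
        (fun q => sder g p.1.2 (splitE r (m - 1 - r) (m - 1) (by omega) q)) p.2) := by
    have h1 : Summable ((quadK (fun q => f (splitE r (n - r) n (by omega) q))
        (fun q => g (splitE r (m - r) m (by omega) q))) ∘ eM) :=
      (Equiv.summable_iff eM).mpr hK
    refine (h1.mul_left ((n : ℝ) * n * ((m : ℝ) * m))).congr fun p => ?_
    exact (hpt p).symm
  -- assemble
  calc (∑' il : ℕ × ℕ,
        nsq (contr (r := r) (c := n + m - 2 - 2 * r) (by omega) (by omega) (by omega)
          (sder f il.1) (sder g il.2)))
      = ∑' il : ℕ × ℕ, ∑' q : ((Fin (n - 1 - r) → ℕ) × (Fin (m - 1 - r) → ℕ)) ×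
            ((Fin r → ℕ) × (Fin r → ℕ)),
          quadK (fun p => sder f il.1 (splitE r (n - 1 - r) (n - 1) (by omega) p))
            (fun p => sder g il.2 (splitE r (m - 1 - r) (m - 1) (by omega) p)) q := by
        refine tsum_congr fun il => ?_
        exact nsq_contr (by omega) (by omega) (by omega) (sder f il.1) (sder g il.2)
          (hsf il.1) (hsg il.2)
    _ = ∑' p : (ℕ × ℕ) × (((Fin (n - 1 - r) → ℕ) × (Fin (m - 1 - r) → ℕ)) ×
            ((Fin r → ℕ) × (Fin r → ℕ))),
          quadK (fun q => sder f p.1.1 (splitE r (n - 1 - r) (n - 1) (by omega) q))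
            (fun q => sder g p.1.2 (splitE r (m - 1 - r) (m - 1) (by omega) q)) p.2 :=
        (Summable.tsum_prod' hbig fun il =>
          (quadK_abs_summable (hQF il.1) (hQG il.2)).of_abs).symm
    _ = ∑' p : (ℕ × ℕ) × (((Fin (n - 1 - r) → ℕ) × (Fin (m - 1 - r) → ℕ)) ×
            ((Fin r → ℕ) × (Fin r → ℕ))),
          ((n : ℝ) * n * ((m : ℝ) * m)) *
            quadK (fun q => f (splitE r (n - r) n (by omega) q))
              (fun q => g (splitE r (m - r) m (by omega) q)) (eM p) :=
        tsum_congr hpt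
    _ = ((n : ℝ) * n * ((m : ℝ) * m)) *
          ∑' p, quadK (fun q => f (splitE r (n - r) n (by omega) q))
            (fun q => g (splitE r (m - r) m (by omega) q)) (eM p) := tsum_mul_left
    _ = ((n : ℝ) * n * ((m : ℝ) * m)) *
          ∑' q', quadK (fun q => f (splitE r (n - r) n (by omega) q))
            (fun q => g (splitE r (m - r) m (by omega) q)) q' := by
        rw [Equiv.tsum_eq eM]
    _ = (n : ℝ) ^ 2 * (m : ℝ) ^ 2 *
          nsq (contr (r := r) (c := n + m - 2 * r) (by omega) (by omega) (by omega) f g) := by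
        rw [nsq_contr (show r ≤ n by omega) (show r ≤ m by omega)
          (show n + m = 2 * r + (n + m - 2 * r) by omega) f g hf2 hg2]
        ring
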